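/- If I is a (two-sided) ideal of L_R(B, L, θ, I, J), then H_I = {A ∈ B : p_A ∈ I} is a hereditary J-saturated ideal of B: it is an ideal, closed under all θ_α, and whenever A ∈ J with θ_α(A) ∈ H_I for all α ∈ L, then A ∈ H_I. -/

import Mathlib

/-- If T is a two-sided ideal of L_R(B,L,θ,I,J) (formalized as any
R-algebra with generators p, s, s* satisfying relations (1)–(5)), then
H_T = {A ∈ B : p_A ∈ T} is a hereditary J-saturated ideal of B: it is an ideal
of B, closed under all θ_α, and whenever A ∈ J with θ_α(A) ∈ H_T for all α ∈ L,
then A ∈ H_T. -/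
theorem stmt18 {R A 𝓑 L : Type*} [CommRing R] [Ring A] [Algebra R A]
    [GeneralizedBooleanAlgebra 𝓑] [DecidableEq L]
    (θ : L → 𝓑 → 𝓑) (𝓘 : L → Set 𝓑) (J : Set 𝓑)
    (hθbot : ∀ a, θ a ⊥ = ⊥)
    (hθinf : ∀ a (x y : 𝓑), θ a (x ⊓ y) = θ a x ⊓ θ a y)
    (hθI : ∀ a (x : 𝓑), θ a x ∈ 𝓘 a)
    (p : 𝓑 → A) (s t : L → 𝓑 → A)
    (R1a : p ⊥ = 0)
    (R1b : ∀ x y : 𝓑, p (x ⊓ y) = p x * p y)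
    (R1c : ∀ x y : 𝓑, p (x ⊔ y) = p x + p y - p (x ⊓ y))
    (R2a : ∀ a, ∀ b ∈ 𝓘 a, ∀ x : 𝓑, p x * s a b = s a b * p (θ a x))
    (R2b : ∀ a, ∀ b ∈ 𝓘 a, ∀ x : 𝓑, t a b * p x = p (θ a x) * t a b)
    (R3 : ∀ a a', ∀ b ∈ 𝓘 a, ∀ b' ∈ 𝓘 a',
      t a b * s a' b' = if a = a' then p (b ⊓ b') else 0)
    (R4a : ∀ a, ∀ b ∈ 𝓘 a, ∀ x : 𝓑, s a b * p x = s a (b ⊓ x))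
    (R4b : ∀ a, ∀ b ∈ 𝓘 a, ∀ x : 𝓑, p x * t a b = t a (b ⊓ x))
    (hJfin : ∀ x ∈ J, {a : L | θ a x ≠ ⊥}.Finite)
    (R5 : ∀ x, ∀ hx : x ∈ J,
      p x = ∑ a ∈ (hJfin x hx).toFinset, s a (θ a x) * t a (θ a x))
    -- T is a two-sided ideal of the algebra
    (T : Set A)
    (hT0 : (0 : A) ∈ T)
    (hTadd : ∀ x ∈ T, ∀ y ∈ T, x + y ∈ T)
    (hTmul : ∀ x ∈ T, ∀ y : A, x * y ∈ T ∧ y * x ∈ T) :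
    (∀ x ∈ {A' : 𝓑 | p A' ∈ T}, ∀ y ∈ {A' : 𝓑 | p A' ∈ T},
        x ⊔ y ∈ {A' : 𝓑 | p A' ∈ T}) ∧
    (∀ x ∈ {A' : 𝓑 | p A' ∈ T}, ∀ y : 𝓑, y ≤ x → y ∈ {A' : 𝓑 | p A' ∈ T}) ∧
    (∀ x ∈ {A' : 𝓑 | p A' ∈ T}, ∀ a : L, θ a x ∈ {A' : 𝓑 | p A' ∈ T}) ∧
    (∀ x ∈ J, (∀ a : L, θ a x ∈ {A' : 𝓑 | p A' ∈ T}) → x ∈ {A' : 𝓑 | p A' ∈ T}) := by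

  have hneg : ∀ x ∈ T, -x ∈ T := fun x hx => by
    have := (hTmul x hx (-1)).1
    simpa using this
  have hsum : ∀ (F : Finset L) (f : L → A), (∀ a ∈ F, f a ∈ T) →
      (∑ a ∈ F, f a) ∈ T := by
    intro F f hf
    classical
    induction F using Finset.induction_on with
    | empty => simpa using hT0
    | insert _ _ hni ih =>
      rw [Finset.sum_insert hni]
      exact hTadd _ (hf _ (Finset.mem_insert_self _ _)) _
        (ih fun a ha => hf a (Finset.mem_insert_of_mem ha))
  refine ⟨?_, ?_, ?_, ?_⟩
  · intro x hx y hy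
    simp only [Set.mem_setOf_eq] at *
    rw [R1c, R1b, sub_eq_add_neg]
    exact hTadd _ (hTadd _ hx _ hy) _ (hneg _ ((hTmul _ hx _).1))
  · intro x hx y hyx
    simp only [Set.mem_setOf_eq] at *
    have : y ⊓ x = y := inf_eq_left.mpr hyx
    have : p y = p y * p x := by rw [← R1b, this]
    rw [this]
    exact (hTmul _ hx _).2
  · intro x hx a
    simp only [Set.mem_setOf_eq] at *
    have hb := hθI a x
    have key : p (θ a x) = t a (θ a x) * (p x * s a (θ a x)) := by
      rw [← mul_assoc, R2b a _ hb, mul_assoc, R3 a a _ hb _ hb]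
      simp [← R1b]
    rw [key]
    exact (hTmul _ ((hTmul _ hx _).1) _).2
  · intro x hx hall
    simp only [Set.mem_setOf_eq] at *
    rw [R5 x hx]
    refine hsum _ _ fun a _ => ?_
    have hb := hθI a x
    have : s a (θ a x) * t a (θ a x)
        = s a (θ a x) * (p (θ a x) * t a (θ a x)) := by
      rw [← mul_assoc, R4a a _ hb]
      simp
    rw [this]
    exact (hTmul _ ((hTmul _ (hall a) _).1) _).2
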